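/- arXiv:2402.01429 — 3 statements merged into one kernel-verified Lean document; each statement's English description precedes it below -/
import Mathlib

section
/- Let r₂ be the formal power series with r₂ = z + z·r₂² (the Catalan-type series). For every integer j ≥ 1, the coefficient of z^{j+2n} in r₂^j equals j·(2n+j-1)!/(n!·(n+j)!), and all other coefficients of r₂^j vanish. -/
open PowerSeries

private noncomputable def fcat (j n : ℕ) : ℚ :=
  (j : ℚ) * (Nat.factorial (2*n + j - 1)) /
    ((Nat.factorial n) * (Nat.factorial (n + j)))

private noncomputable def Fc : ℕ → ℕ → ℚ
  | 0, m => if m = 0 then 1 else 0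
  | (j+1), m => if (j+1) ≤ m ∧ (m - (j+1)) % 2 = 0 then fcat (j+1) ((m-(j+1))/2) else 0

private lemma Fc_zero (m : ℕ) : Fc 0 m = if m = 0 then 1 else 0 := rfl

private lemma Fc_succ (j m : ℕ) :
    Fc (j+1) m = if (j+1) ≤ m ∧ (m - (j+1)) % 2 = 0 then fcat (j+1) ((m-(j+1))/2) else 0 := rfl

private lemma fcat_zero (j : ℕ) (hj : 1 ≤ j) : fcat j 0 = 1 := by
  obtain ⟨k, rfl⟩ := Nat.exists_eq_add_of_le hj
  unfold fcat
  rw [show 2*0 + (1+k) - 1 = k from by omega, show 0 + (1+k) = k+1 from by omega,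
    Nat.factorial_succ, Nat.factorial_zero]
  rw [div_eq_one_iff_eq (by positivity)]
  push_cast; ring

private lemma fcat_rec (k s : ℕ) : fcat (k+1) (s+1) = fcat k (s+1) + fcat (k+2) s := by
  unfold fcat
  rw [show 2*(s+1) + (k+1) - 1 = (2*s+k+1) + 1 from by omega,
    show 2*(s+1) + k - 1 = 2*s+k+1 from by omega,
    show 2*s + (k+2) - 1 = 2*s+k+1 from by omega,
    show (s+1) + (k+1) = (s+k+1) + 1 from by omega,
    show s + (k+2) = (s+k+1) + 1 from by omega,
    show (s+1) + k = s+k+1 from by omega,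
    Nat.factorial_succ (2*s+k+1), Nat.factorial_succ (s+k+1), Nat.factorial_succ s]
  have p1 : (Nat.factorial (2*s+k+1) : ℚ) ≠ 0 := by positivity
  have p2 : (Nat.factorial s : ℚ) ≠ 0 := by positivity
  have p3 : (Nat.factorial (s+k+1) : ℚ) ≠ 0 := by positivity
  field_simp
  push_cast
  ring

private lemma Fc_rec (k m : ℕ) : Fc (k+1) (m+1) = Fc k m + Fc (k+2) m := by
  rcases Nat.lt_or_ge m k with h | h
  · -- k > m : everything is 0
    rw [Fc_succ, if_neg (by omega), Fc_succ, if_neg (by omega)]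
    cases k with
    | zero => omega
    | succ t => rw [Fc_succ, if_neg (by omega)]; ring
  · by_cases hp : (m - k) % 2 = 0
    · -- m = k + 2*n
      obtain ⟨n, hn⟩ : ∃ n, m = k + 2*n := ⟨(m-k)/2, by omega⟩
      subst hn
      cases n with
      | zero =>
        rw [Fc_succ, if_pos (by omega), show (k + 2*0 + 1 - (k+1))/2 = 0 from by omega,
          fcat_zero _ (by omega), Fc_succ, if_neg (by omega)]
        cases k with
        | zero => simp [Fc_zero]
        | succ t =>
          rw [Fc_succ, if_pos (by omega), show (t + 1 + 2*0 - (t+1))/2 = 0 from by omega,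
            fcat_zero _ (by omega)]
          ring
      | succ s =>
        rw [Fc_succ, if_pos (by omega), show (k + 2*(s+1) + 1 - (k+1))/2 = s+1 from by omega,
          Fc_succ, if_pos (by omega), show (k + 2*(s+1) - (k+2))/2 = s from by omega]
        cases k with
        | zero =>
          rw [Fc_zero, if_neg (by omega), fcat_rec]
          have : fcat 0 (s+1) = 0 := by simp [fcat]
          rw [this]
        | succ t =>
          rw [Fc_succ, if_pos (by omega),
            show (t + 1 + 2*(s+1) - (t+1))/2 = s+1 from by omega]
          exact fcat_rec (t+1) s
    · -- parity failure : everything is 0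
      rw [Fc_succ, if_neg (by omega), Fc_succ, if_neg (by omega)]
      cases k with
      | zero => rw [Fc_zero, if_neg (by omega)]; ring
      | succ t => rw [Fc_succ, if_neg (by omega)]; ring

theorem stanley_r2_powers_coeff (r₂ : PowerSeries ℚ)
    (h0 : constantCoeff r₂ = 0)
    (hquad : X * r₂^2 - r₂ + X = 0) :
    ∀ j : ℕ, 1 ≤ j →
      (∀ n : ℕ, coeff (j + 2*n) (r₂^j) =
        (j : ℚ) * (Nat.factorial (2*n + j - 1)) /
          ((Nat.factorial n) * (Nat.factorial (n + j)))) ∧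
      (∀ m : ℕ, (¬ ∃ n : ℕ, m = j + 2*n) → coeff m (r₂^j) = 0) := by
  have hr : r₂ = X * r₂^2 + X := by linear_combination -hquad
  have hrec : ∀ k m : ℕ, coeff (m+1) (r₂^(k+1)) =
      coeff m (r₂^k) + coeff m (r₂^(k+2)) := by
    intro k m
    have hsplit : r₂^(k+1) = X * r₂^k + X * r₂^(k+2) := by
      calc r₂^(k+1) = (X * r₂^2 + X) * r₂^k := by rw [← hr]; ring
      _ = X * r₂^k + X * r₂^(k+2) := by ring
    rw [hsplit, map_add, coeff_succ_X_mul, coeff_succ_X_mul]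
  have key : ∀ m j : ℕ, coeff m (r₂^j) = Fc j m := by
    intro m
    induction m with
    | zero =>
      intro j
      cases j with
      | zero => simp [Fc_zero]
      | succ t =>
        rw [coeff_zero_eq_constantCoeff, map_pow, h0, zero_pow (by omega),
          Fc_succ, if_neg (by omega)]
    | succ m ih =>
      intro j
      cases j with
      | zero => simp [Fc_zero]
      | succ k => rw [hrec, ih k, ih (k+2), Fc_rec]
  intro j hj
  obtain ⟨k, rfl⟩ : ∃ k, j = k + 1 := ⟨j - 1, by omega⟩
  constructor
  · intro n
    rw [key, Fc_succ, if_pos (by omega), show (k + 1 + 2*n - (k+1))/2 = n from by omega]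
    rfl
  · intro m hm
    rw [key, Fc_succ, if_neg]
    rintro ⟨hle, hpar⟩
    exact hm ⟨(m - (k+1))/2, by omega⟩
end

section
/- Under the substitution Z = v/(1 + 3v + v²) of formal power series (v a formal variable with zero constant term), the series (1 + Z - √(1-6Z+5Z²))/(2Z) equals 2 + v. -/
open PowerSeries

theorem skew_r2_substitution (Z s : PowerSeries ℚ)
    (hZ : Z = X * (1 + 3*X + X^2)⁻¹)
    (hs0 : constantCoeff s = 1)
    (hs : s^2 = 1 - 6*Z + 5*Z^2) :
    1 + Z - s = 2*Z * (2 + X) := by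
  have hu : (constantCoeff (R := ℚ)) (1 + 3*X + X^2) ≠ 0 := by simp
  have hZu : Z * (1 + 3*X + X^2) = X := by
    rw [hZ, mul_assoc, PowerSeries.inv_mul_cancel _ hu, mul_one]
  have hZ0 : constantCoeff Z = 0 := by simp [hZ]
  set t : PowerSeries ℚ := 1 - Z * (3 + 2*X) with ht
  have ht2 : t^2 = 1 - 6*Z + 5*Z^2 := by
    rw [ht]; linear_combination (4*Z) * hZu
  have hst : (s - t) * (s + t) = 0 := by
    linear_combination hs - ht2
  rcases mul_eq_zero.mp hst with h | h
  · linear_combination -h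
  · exfalso
    have := congrArg (constantCoeff) h
    simp [ht, hs0, hZ0] at this
end

section
/- Define the weighted trinomial coefficient T(n, k) = [t^k](1 + 3t + t²)ⁿ. For Z = v/(1+3v+v²) and all n ≥ 1, ℓ ≥ 0: the coefficient of Zⁿ in (2+v)^ℓ (where v = v(Z) is the compositional inverse power series) equals Σ_{k=0}^{ℓ} binom(ℓ,k)·2^{ℓ-k}·(T(n-1, n-k) - T(n-1, n-k-2)). -/
open PowerSeries

/-- Weighted trinomial coefficient `T(n,k) = [t^k](1+3t+t^2)^n`, with `T(n,k)=0` for `k<0`. -/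
noncomputable def trinom (n : ℕ) (k : ℤ) : ℚ :=
  if 0 ≤ k then coeff k.toNat ((1 + 3*X + X^2)^n) else 0

lemma coeff_trimul (P : PowerSeries ℚ) (m : ℕ) :
    coeff m ((1 + 3*X + X^2) * P) =
      coeff m P + 3 * (if 1 ≤ m then coeff (m-1) P else 0)
        + (if 2 ≤ m then coeff (m-2) P else 0) := by
  have h : (1 + 3*X + X^2) * P = P + (C 3) * (X * P) + X * (X * P) := by
    simp only [map_ofNat]; ring_nf
  rw [h, map_add, map_add, coeff_C_mul]
  match m with
  | 0 => simp
  | 1 => simp [coeff_succ_X_mul]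
  | (m+2) => simp [coeff_succ_X_mul, show m+2-1 = m+1 by omega]

lemma trinom_rec (n : ℕ) (k : ℤ) :
    trinom (n+1) k = trinom n k + 3 * trinom n (k-1) + trinom n (k-2) := by
  rcases lt_or_ge k 0 with hk | hk
  · simp [trinom, not_le.2 hk, not_le.2 (by omega : k - 1 < 0), not_le.2 (by omega : k - 2 < 0),
      not_le.2 (by omega : k < 1), not_le.2 (by omega : k < 2)]
  obtain ⟨m, rfl⟩ := Int.eq_ofNat_of_zero_le hk
  have hpow : ((1:PowerSeries ℚ) + 3*X + X^2)^(n+1) = (1+3*X+X^2) * (1+3*X+X^2)^n := by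
    ring
  match m with
  | 0 => simp [trinom, hpow, coeff_trimul]
  | 1 => simp [trinom, hpow, coeff_trimul, show ((1:ℤ) - 1) = 0 by ring]
  | (m+2) =>
    have e1 : ((m:ℤ)+2) - 1 = ((m+1 : ℕ) : ℤ) := by push_cast; ring
    have e2 : ((m:ℤ)+2) - 2 = ((m : ℕ) : ℤ) := by push_cast; ring
    have e0 : (((m+2 : ℕ)) : ℤ) = (m:ℤ)+2 := by push_cast; ring
    rw [e0, trinom, trinom, e1, e2, trinom, trinom]
    simp [hpow, coeff_trimul, show ((m:ℤ)+2).toNat = m+2 by omega,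
      show (0:ℤ) ≤ (m:ℤ)+2 by omega, show (0:ℤ) ≤ (m:ℤ)+1 by omega,
      show m+2-1 = m+1 by omega]

lemma trinom_zero' (j : ℤ) : trinom 0 j = if j = 0 then 1 else 0 := by
  unfold trinom
  rcases lt_or_ge j 0 with hj | hj
  · rw [if_neg (not_le.2 hj), if_neg (by omega)]
  · rw [if_pos hj, pow_zero, coeff_one]
    by_cases hj0 : j = 0
    · simp [hj0]
    · rw [if_neg (by omega : ¬ j.toNat = 0), if_neg hj0]

lemma trinom_symm (n : ℕ) (k : ℤ) : trinom n k = trinom n (2*n - k) := by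
  induction n generalizing k with
  | zero =>
    rw [trinom_zero', trinom_zero']
    by_cases hk0 : k = 0
    · simp [hk0]
    · rw [if_neg hk0, if_neg (by push_cast; omega)]
  | succ n ih =>
    rw [trinom_rec, ih k, ih (k-1), ih (k-2), trinom_rec]
    push_cast
    rw [show 2*((n:ℤ)+1) - k - 1 = 2*n - (k-1) by ring,
        show 2*((n:ℤ)+1) - k - 2 = 2*n - k by ring,
        show 2*((n:ℤ)+1) - k = 2*n - (k-2) by ring]
    ring

lemma key (v : PowerSeries ℚ)
    (h0 : constantCoeff v = 0)
    (hv : v = X * (1 + 3*v + v^2)) :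
    ∀ n : ℕ, ∀ k : ℕ, coeff (n+1) (v^k) =
      trinom n ((n:ℤ) + 1 - k) - trinom n ((n:ℤ) + 1 - k - 2) := by
  have hstep : ∀ k : ℕ, v^(k+1) = X * (v^k + 3*v^(k+1) + v^(k+2)) := by
    intro k
    calc v^(k+1) = v^k * v := by ring
    _ = v^k * (X*(1+3*v+v^2)) := by rw [← hv]
    _ = X * (v^k + 3*v^(k+1) + v^(k+2)) := by ring
  intro n
  induction n with
  | zero =>
    intro k
    match k with
    | 0 =>
      simp [trinom_zero', coeff_one]
    | 1 =>
      have h1 : coeff 1 v = 1 := by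
        conv_lhs => rw [hv]
        have h2 := coeff_succ_X_mul (R := ℚ) 0 (1 + 3*v + v^2)
        rw [zero_add] at h2
        rw [h2]
        simp [h0]
      simp [h1, trinom_zero']
    | (m+2) =>
      have hx : v ^ (m+2) = X * ((1+3*v+v^2) * v^(m+1)) := by
        calc v^(m+2) = v * v^(m+1) := by ring
        _ = (X*(1+3*v+v^2)) * v^(m+1) := by rw [← hv]
        _ = X * ((1+3*v+v^2) * v^(m+1)) := by ring
      have h2 := coeff_succ_X_mul (R := ℚ) 0 ((1+3*v+v^2) * v^(m+1))
      rw [zero_add] at h2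
      rw [hx, h2]
      rw [coeff_zero_eq_constantCoeff, map_mul, map_pow, h0]
      rw [trinom_zero', trinom_zero']
      rw [if_neg (by push_cast; omega), if_neg (by push_cast; omega)]
      ring
  | succ n ih =>
    intro k
    match k with
    | 0 =>
      have hs : trinom (n+1) ((n:ℤ)+2) = trinom (n+1) ((n:ℤ)) := by
        rw [trinom_symm (n+1) ((n:ℤ)+2)]
        congr 1; push_cast; ring
      rw [pow_zero, coeff_one, if_neg (by omega)]
      rw [show (((n+1:ℕ):ℤ) + 1 - ((0:ℕ):ℤ) : ℤ) = (n:ℤ)+2 by push_cast; ring,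
          show ((n:ℤ)+2-2 : ℤ) = (n:ℤ) by ring, hs]
      ring
    | (k+1) =>
      have hc : ∀ f : PowerSeries ℚ, coeff (n+1) (3 * f) = 3 * coeff (n+1) f := by
        intro f
        rw [show (3 : PowerSeries ℚ) = C 3 by simp only [map_ofNat], coeff_C_mul]
      rw [hstep k, coeff_succ_X_mul, map_add, map_add, hc, ih k, ih (k+1), ih (k+2),
          trinom_rec, trinom_rec]
      push_cast
      ring_nf

theorem skew_r2_power_coeffs (v : PowerSeries ℚ)
    (h0 : constantCoeff v = 0)
    (hv : v = X * (1 + 3*v + v^2)) :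
    ∀ n : ℕ, 1 ≤ n → ∀ ℓ : ℕ,
      coeff n ((2 + v)^ℓ) =
        ∑ k ∈ Finset.range (ℓ + 1),
          (Nat.choose ℓ k : ℚ) * 2^(ℓ - k) *
            (trinom (n - 1) ((n : ℤ) - k) - trinom (n - 1) ((n : ℤ) - k - 2)) := by
  intro n hn ℓ
  obtain ⟨m, rfl⟩ : ∃ m, n = m + 1 := ⟨n - 1, by omega⟩
  rw [show (2 + v : PowerSeries ℚ) = v + 2 by ring, add_pow, map_sum]
  apply Finset.sum_congr rfl
  intro k hk
  rw [show ((2:PowerSeries ℚ)) = C 2 by simp only [map_ofNat],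
      show ((Nat.choose ℓ k : ℚ⟦X⟧)) = C ((Nat.choose ℓ k : ℚ)) by simp only [map_natCast],
      ← map_pow, mul_assoc, ← map_mul, coeff_mul_C, key v h0 hv m k,
      Nat.add_sub_cancel]
  push_cast
  ring
end
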